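/- Let V₁, …, Vₙ be independent mean-zero random vectors with covariance Σ, P̄₁ = I - H an orthogonal projection (H the hat matrix), and V̂ = P̄₁V. Then for i ≠ j, E[(V̂ᵢᵀV̂ⱼ)²] = (P̄_{ii,1}P̄_{jj,1} + P̄_{ij,1}²)‖Σ‖_F² + P̄_{ij,1}² (trace Σ)² + Σ_{k=1}^n (P̄_{ik,1}P̄_{jk,1})² {Var(V₁ᵀV₁) - 2‖Σ‖_F²}. -/

import Mathlib

open MeasureTheory ProbabilityTheory Matrix Finset

lemma my_integral_prod_of_indep {Ω : Type*} [MeasureSpace Ω]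
    [IsProbabilityMeasure (ℙ : Measure Ω)] {ι : Type*} {f : ι → Ω → ℝ}
    (h : iIndepFun f ℙ) (hm : ∀ u, Measurable (f u))
    (s : Finset ι) : ∫ ω, ∏ u ∈ s, f u ω = ∏ u ∈ s, ∫ ω, f u ω := by
  classical
  induction s using Finset.cons_induction with
  | empty => simp
  | cons a s ha ih =>
    have hindep : IndepFun (∏ u ∈ s, f u) (f a) ℙ :=
      h.indepFun_finsetProd_of_notMem hm ha
    have hmp : Measurable (∏ u ∈ s, f u) := by
      rw [Finset.prod_fn]; exact Finset.measurable_prod s fun u _ => hm u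
    have h1 : ∫ ω, ∏ u ∈ Finset.cons a s ha, f u ω
        = ∫ ω, (∏ u ∈ s, f u) ω * f a ω := by
      refine integral_congr_ae (Filter.Eventually.of_forall fun ω => ?_)
      simp only []
      rw [Finset.prod_cons, Finset.prod_apply, mul_comm]
    rw [h1, hindep.integral_fun_mul_eq_mul_integral hmp.aestronglyMeasurable (hm a).aestronglyMeasurable]
    rw [Finset.prod_cons, ← ih, mul_comm]
    congr 1
    exact integral_congr_ae (Filter.Eventually.of_forall fun ω => by simp [Finset.prod_apply])

lemma my_meas_ite {Ω : Type*} [MeasurableSpace Ω] (p : Prop) [Decidable p]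
    {g : Ω → ℝ} (hg : Measurable g) : Measurable (fun ω => if p then g ω else 1) := by
  by_cases h : p
  · simpa [h] using hg
  · simp [h]

lemma my_halg {n : ℕ} (c d : Fin n → ℝ) (T Fv R : ℝ) :
    (∑ a, ∑ c', ∑ b, ∑ e, (c a * d b * (c c' * d e)) *
      ((if c' = e then (if a = b then T else 0) else 0)
        + (if b = e then (if a = c' then Fv else 0) else 0)
        + (if a = e then (if b = c' then Fv else 0) else 0)
        + (if a = e then (if a = b then (if a = c' then R else 0) else 0) else 0)))
    = T * (∑ a, c a * d a)^2 + Fv * ((∑ a, c a * c a) * (∑ a, d a * d a))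
      + Fv * (∑ a, c a * d a)^2 + R * ∑ a, (c a * d a)^2 := by
  simp only [mul_add, Finset.sum_add_distrib, mul_ite, mul_zero, Finset.sum_ite_irrel,
    Finset.sum_const_zero, Finset.sum_ite_eq, Finset.sum_ite_eq', Finset.mem_univ, if_true]
  have h1 : T * (∑ a, c a * d a)^2 = ∑ x, ∑ x1, c x * d x * (c x1 * d x1) * T := by
    rw [sq, Finset.sum_mul_sum, Finset.mul_sum]
    refine sum_congr rfl fun x _ => ?_
    rw [Finset.mul_sum]; exact sum_congr rfl fun y _ => by ring
  have h2 : Fv * ((∑ a, c a * c a) * (∑ a, d a * d a))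
      = ∑ x, ∑ x1, c x * d x1 * (c x * d x1) * Fv := by
    rw [Finset.sum_mul_sum, Finset.mul_sum]
    refine sum_congr rfl fun x _ => ?_
    rw [Finset.mul_sum]; exact sum_congr rfl fun y _ => by ring
  have h3 : Fv * (∑ a, c a * d a)^2 = ∑ x, ∑ x1, c x * d x1 * (c x1 * d x) * Fv := by
    rw [sq, Finset.sum_mul_sum, Finset.mul_sum]
    refine sum_congr rfl fun x _ => ?_
    rw [Finset.mul_sum]; exact sum_congr rfl fun y _ => by ring
  have h4 : R * (∑ a, (c a * d a)^2) = ∑ x, c x * d x * (c x * d x) * R := by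
    rw [Finset.mul_sum]; exact sum_congr rfl fun y _ => by ring
  rw [h1, h2, h3, h4]

theorem stmt_19 {Ω : Type*} [MeasureSpace Ω] [IsProbabilityMeasure (ℙ : Measure Ω)]
    {n d : ℕ} (V : Fin n → Ω → Fin d → ℝ) (S : Matrix (Fin d) (Fin d) ℝ)
    (B : Matrix (Fin n) (Fin n) ℝ) (hBsym : Bᵀ = B) (hBidem : B * B = B)
    (hmeas : ∀ i, Measurable (V i))
    (hindep : iIndepFun V ℙ)
    (hident : ∀ i j, Measure.map (V i) ℙ = Measure.map (V j) ℙ)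
    (hmean : ∀ i k, ∫ ω, V i ω k = 0)
    (hcov : ∀ i k l, ∫ ω, V i ω k * V i ω l = S k l)
    (hmom4 : ∀ i, Integrable (fun ω => (∑ k, (V i ω k) ^ 2) ^ 2) ℙ)
    (Vhat : Fin n → Ω → Fin d → ℝ)
    (hVhat : ∀ i ω k, Vhat i ω k = ∑ j, B i j * V j ω k)
    (i j : Fin n) (hij : i ≠ j) :
    ∫ ω, (∑ k, Vhat i ω k * Vhat j ω k) ^ 2
      = (B i i * B j j + (B i j) ^ 2) * (∑ k, ∑ l, (S k l) ^ 2)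
        + (B i j) ^ 2 * (∑ k, S k k) ^ 2
        + (∑ k, (B i k * B j k) ^ 2) *
            (variance (fun ω => ∑ k, (V i ω k) ^ 2) ℙ
              - 2 * (∑ k, ∑ l, (S k l) ^ 2)) := by
  classical
  -- basic measurability
  have hVk : ∀ a (k : Fin d), Measurable fun ω => V a ω k :=
    fun a k => (measurable_pi_apply k).comp (hmeas a)
  set IP : Fin n → Fin n → Ω → ℝ := fun a b ω => ∑ k, V a ω k * V b ω k with hIPdef
  have hIPmeas : ∀ a b, Measurable (IP a b) :=
    fun a b => Finset.measurable_sum _ fun k _ => (hVk a k).mul (hVk b k)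
  have hIPcomm : ∀ a b, IP a b = IP b a :=
    fun a b => funext fun ω => Finset.sum_congr rfl fun k _ => mul_comm _ _
  set tr : ℝ := ∑ k, S k k with htr
  set F : ℝ := ∑ k, ∑ l, (S k l)^2 with hFdef
  set m4 : ℝ := ∫ ω, (∑ k, (V i ω k)^2)^2 with hm4def
  -- identical fourth moments
  have hφmeas : Measurable fun x : Fin d → ℝ => (∑ k, (x k)^2)^2 :=
    (Finset.measurable_sum _ fun k _ => (measurable_pi_apply k).pow_const 2).pow_const 2
  have hm4 : ∀ a, ∫ ω, (∑ k, (V a ω k)^2)^2 = m4 := by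
    intro a
    have e1 : ∀ b : Fin n, ∫ ω, (∑ k, (V b ω k)^2)^2
        = ∫ x, (∑ k, (x k)^2)^2 ∂(Measure.map (V b) ℙ) :=
      fun b => (integral_map (hmeas b).aemeasurable hφmeas.aestronglyMeasurable).symm
    rw [hm4def, e1 a, e1 i, hident a i]
  -- integrability facts
  have hXint : ∀ a, Integrable (fun ω => ∑ k, (V a ω k)^2) ℙ := by
    intro a
    refine Integrable.mono' ((integrable_const (1:ℝ)).add (hmom4 a))
      (Finset.measurable_sum _ fun k _ => (hVk a k).pow_const 2).aestronglyMeasurable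
      (Filter.Eventually.of_forall fun ω => ?_)
    have h0 : (0:ℝ) ≤ ∑ k, (V a ω k)^2 := Finset.sum_nonneg fun k _ => sq_nonneg _
    rw [Real.norm_eq_abs, abs_of_nonneg h0]
    simp only [Pi.add_apply]
    nlinarith [sq_nonneg ((∑ k, (V a ω k)^2) - 1)]
  have hsq_le : ∀ a (ω : Ω) (k : Fin d), (V a ω k)^2 ≤ ∑ m, (V a ω m)^2 :=
    fun a ω k => Finset.single_le_sum (f := fun m => (V a ω m)^2)
      (fun m _ => sq_nonneg _) (Finset.mem_univ k)
  have hsqint : ∀ a (k l : Fin d), Integrable (fun ω => V a ω k * V a ω l) ℙ := by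
    intro a k l
    refine Integrable.mono' ((hXint a).add (hXint a))
      ((hVk a k).mul (hVk a l)).aestronglyMeasurable
      (Filter.Eventually.of_forall fun ω => ?_)
    rw [Real.norm_eq_abs]
    simp only [Pi.add_apply]
    have h1 := hsq_le a ω k
    have h2 := hsq_le a ω l
    rw [abs_le]
    constructor <;> nlinarith [sq_nonneg (V a ω k - V a ω l), sq_nonneg (V a ω k + V a ω l)]
  have int4 : ∀ a b c e (k l : Fin d),
      Integrable (fun ω => V a ω k * V b ω k * (V c ω l * V e ω l)) ℙ := by
    intro a b c e k l
    refine Integrable.mono' (((hmom4 a).add (hmom4 b)).add ((hmom4 c).add (hmom4 e)))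
      (((hVk a k).mul (hVk b k)).mul ((hVk c l).mul (hVk e l))).aestronglyMeasurable
      (Filter.Eventually.of_forall fun ω => ?_)
    rw [Real.norm_eq_abs]
    simp only [Pi.add_apply]
    set x := V a ω k; set y := V b ω k; set z := V c ω l; set w := V e ω l
    have hxa : x^2 ≤ ∑ m, (V a ω m)^2 := hsq_le a ω k
    have hyb : y^2 ≤ ∑ m, (V b ω m)^2 := hsq_le b ω k
    have hzc : z^2 ≤ ∑ m, (V c ω m)^2 := hsq_le c ω l
    have hwe : w^2 ≤ ∑ m, (V e ω m)^2 := hsq_le e ω l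
    have hxa4 : x^4 ≤ (∑ m, (V a ω m)^2)^2 := by nlinarith [sq_nonneg x]
    have hyb4 : y^4 ≤ (∑ m, (V b ω m)^2)^2 := by nlinarith [sq_nonneg y]
    have hzc4 : z^4 ≤ (∑ m, (V c ω m)^2)^2 := by nlinarith [sq_nonneg z]
    have hwe4 : w^4 ≤ (∑ m, (V e ω m)^2)^2 := by nlinarith [sq_nonneg w]
    have habs : |x * y * (z * w)| ≤ x^4 + y^4 + z^4 + w^4 := by
      rw [abs_le]
      constructor <;>
        nlinarith [sq_nonneg (x*y - z*w), sq_nonneg (x*y + z*w), sq_nonneg (x^2 - y^2),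
          sq_nonneg (z^2 - w^2), sq_nonneg (x^2 + y^2), sq_nonneg (z^2 + w^2)]
    linarith
  -- expansion of products of IP
  have hIPexp : ∀ a b c e (ω : Ω), IP a b ω * IP c e ω
      = ∑ k, ∑ l, V a ω k * V b ω k * (V c ω l * V e ω l) := by
    intro a b c e ω
    rw [hIPdef]
    rw [Finset.sum_mul_sum]
  have hIPIPint : ∀ a b c e, Integrable (fun ω => IP a b ω * IP c e ω) ℙ := by
    intro a b c e
    have : (fun ω => IP a b ω * IP c e ω)
        = fun ω => ∑ k, ∑ l, V a ω k * V b ω k * (V c ω l * V e ω l) :=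
      funext fun ω => hIPexp a b c e ω
    rw [this]
    exact integrable_finset_sum _ fun k _ => integrable_finset_sum _ fun l _ => int4 a b c e k l
  -- the zero case: first index appears exactly once
  have gzero : ∀ a b c e, b ≠ a → c ≠ a → e ≠ a → ∫ ω, IP a b ω * IP c e ω = 0 := by
    intro a b c e hba hca hea
    have h1 : ∫ ω, IP a b ω * IP c e ω
        = ∑ k, ∑ l, ∫ ω, V a ω k * V b ω k * (V c ω l * V e ω l) := by
      rw [integral_congr_ae (Filter.Eventually.of_forall (hIPexp a b c e)),
        integral_finset_sum _ fun k _ => integrable_finset_sum _ fun l _ => int4 a b c e k l]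
      exact Finset.sum_congr rfl fun k _ =>
        integral_finset_sum _ fun l _ => int4 a b c e k l
    rw [h1]
    refine Finset.sum_eq_zero fun k _ => Finset.sum_eq_zero fun l _ => ?_
    -- product trick
    set g : Fin n → (Fin d → ℝ) → ℝ := fun u x =>
      (if a = u then x k else 1) * (if b = u then x k else 1) *
        ((if c = u then x l else 1) * (if e = u then x l else 1)) with hgdef
    have hgmeas : ∀ u, Measurable (g u) := by
      intro u
      refine Measurable.mul (Measurable.mul ?_ ?_) (Measurable.mul ?_ ?_) <;>
        exact my_meas_ite _ (measurable_pi_apply _)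
    have hiind : iIndepFun (fun u ω => g u (V u ω)) ℙ :=
      hindep.comp g hgmeas
    have heq : (fun ω => V a ω k * V b ω k * (V c ω l * V e ω l))
        = fun ω => ∏ u, g u (V u ω) := by
      funext ω
      simp only [hgdef, Finset.prod_mul_distrib, Finset.prod_ite_eq, Finset.mem_univ, if_true]
    rw [heq, my_integral_prod_of_indep hiind (fun u => (hgmeas u).comp (hmeas u))]
    refine Finset.prod_eq_zero (Finset.mem_univ a) ?_
    have : (fun ω => g a (V a ω)) = fun ω => V a ω k := by
      funext ω
      simp [hgdef, hba, hca, hea]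
    rw [this]
    exact hmean a k
  -- case all equal
  have gall : ∀ a, ∫ ω, IP a a ω * IP a a ω = m4 := by
    intro a
    rw [← hm4 a]
    refine integral_congr_ae (Filter.Eventually.of_forall fun ω => ?_)
    rw [hIPdef]
    simp only [← sq]
  -- case a=b, c=e, a ≠ c
  have hIPint1 : ∀ a, Integrable (IP a a) ℙ := by
    intro a
    have : IP a a = fun ω => ∑ k, V a ω k * V a ω k := rfl
    rw [this]
    exact integrable_finset_sum _ fun k _ => hsqint a k k
  have hIPmean : ∀ a, ∫ ω, IP a a ω = tr := by
    intro a
    rw [hIPdef]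
    rw [integral_finset_sum _ fun k _ => hsqint a k k]
    exact Finset.sum_congr rfl fun k _ => hcov a k k
  have gtr : ∀ a c, a ≠ c → ∫ ω, IP a a ω * IP c c ω = tr^2 := by
    intro a c hac
    have hInd : IndepFun (IP a a) (IP c c) ℙ := by
      have h0 : IndepFun (V a) (V c) ℙ := hindep.indepFun hac
      have := h0.comp (φ := fun x : Fin d → ℝ => ∑ k, x k * x k)
        (ψ := fun x : Fin d → ℝ => ∑ k, x k * x k)
        (Finset.measurable_sum _ fun k _ => (measurable_pi_apply k).mul (measurable_pi_apply k))
        (Finset.measurable_sum _ fun k _ => (measurable_pi_apply k).mul (measurable_pi_apply k))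
      exact this
    rw [hInd.integral_fun_mul_eq_mul_integral (hIPmeas a a).aestronglyMeasurable (hIPmeas c c).aestronglyMeasurable,
      hIPmean a, hIPmean c, sq]
  -- case a=c, b=e, a ≠ b
  have gF : ∀ a b, a ≠ b → ∫ ω, IP a b ω * IP a b ω = F := by
    intro a b hab
    have h1 : ∫ ω, IP a b ω * IP a b ω
        = ∑ k, ∑ l, ∫ ω, V a ω k * V b ω k * (V a ω l * V b ω l) := by
      rw [integral_congr_ae (Filter.Eventually.of_forall (hIPexp a b a b)),
        integral_finset_sum _ fun k _ => integrable_finset_sum _ fun l _ => int4 a b a b k l]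
      exact Finset.sum_congr rfl fun k _ =>
        integral_finset_sum _ fun l _ => int4 a b a b k l
    rw [h1, hFdef]
    refine Finset.sum_congr rfl fun k _ => Finset.sum_congr rfl fun l _ => ?_
    have h2 : (fun ω => V a ω k * V b ω k * (V a ω l * V b ω l))
        = fun ω => (V a ω k * V a ω l) * (V b ω k * V b ω l) := by
      funext ω; ring
    have hInd : IndepFun (fun ω => V a ω k * V a ω l) (fun ω => V b ω k * V b ω l) ℙ := by
      have h0 : IndepFun (V a) (V b) ℙ := hindep.indepFun hab
      exact h0.comp (φ := fun x : Fin d → ℝ => x k * x l) (ψ := fun x : Fin d → ℝ => x k * x l)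
        ((measurable_pi_apply k).mul (measurable_pi_apply l))
        ((measurable_pi_apply k).mul (measurable_pi_apply l))
    rw [h2, hInd.integral_fun_mul_eq_mul_integral ((hVk a k).mul (hVk a l)).aestronglyMeasurable
      ((hVk b k).mul (hVk b l)).aestronglyMeasurable, hcov a k l, hcov b k l, sq]
  -- the master moment formula
  have key : ∀ a b c e, ∫ ω, IP a b ω * IP c e ω
      = (if c = e then (if a = b then tr^2 else 0) else 0)
        + (if b = e then (if a = c then F else 0) else 0)
        + (if a = e then (if b = c then F else 0) else 0)
        + (if a = e then (if a = b then (if a = c then m4 - tr^2 - 2*F else 0) else 0) else 0) := by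
    intro a b c e
    by_cases hab : a = b
    · subst hab
      by_cases hce : c = e
      · subst hce
        by_cases hac : a = c
        · subst hac
          rw [gall a]
          simp
          ring
        · have hca : c ≠ a := fun h => hac h.symm
          rw [gtr a c hac]
          simp [hac, hca]
      · have hLHS : ∫ ω, IP a a ω * IP c e ω = 0 := by
          by_cases hca : c = a
          · have hea : e ≠ a := fun h => hce (hca.trans h.symm)
            have h2 : (fun ω => IP a a ω * IP c e ω) = fun ω => IP e a ω * IP a a ω := by
              funext ω; rw [hca, hIPcomm a e]; ring
            calc ∫ ω, IP a a ω * IP c e ω = ∫ ω, IP e a ω * IP a a ω := by rw [h2]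
              _ = 0 := gzero e a a a (Ne.symm hea) (Ne.symm hea) (Ne.symm hea)
          · have h2 : (fun ω => IP a a ω * IP c e ω) = fun ω => IP c e ω * IP a a ω := by
              funext ω; ring
            calc ∫ ω, IP a a ω * IP c e ω = ∫ ω, IP c e ω * IP a a ω := by rw [h2]
              _ = 0 := gzero c e a a (fun h => hce h.symm) (fun h => hca h.symm) (fun h => hca h.symm)
        rw [hLHS]
        by_cases hae : a = e
        · have hac : ¬ a = c := fun h => hce (h.symm.trans hae)
          have hec : ¬ e = c := fun h => hac (hae.trans h)
          simp [hce, hae, hac, hec]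
        · simp [hce, hae]
    · have hba : b ≠ a := fun h => hab h.symm
      by_cases hce : c = e
      · subst hce
        have hLHS : ∫ ω, IP a b ω * IP c c ω = 0 := by
          by_cases hac : a = c
          · have hcb : c ≠ b := fun h => hab (hac.trans h)
            have h2 : (fun ω => IP a b ω * IP c c ω) = fun ω => IP b a ω * IP c c ω := by
              funext ω; rw [hIPcomm a b]
            calc ∫ ω, IP a b ω * IP c c ω = ∫ ω, IP b a ω * IP c c ω := by rw [h2]
              _ = 0 := gzero b a c c hab hcb hcb
          · exact gzero a b c c hba (fun h => hac h.symm) (fun h => hac h.symm)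
        rw [hLHS]
        by_cases hac : a = c
        · have hbc : ¬ b = c := fun h => hab (hac.trans h.symm)
          have hcb : ¬ c = b := fun h => hbc (h.symm)
          simp [hab, hac, hbc, hcb]
        · simp [hab, hac]
      · by_cases hac : a = c
        · subst hac
          by_cases hbe : b = e
          · subst hbe
            rw [gF a b hab]
            simp [hab, hba, hce]
          · have hea : e ≠ a := fun h => hce h.symm
            have hLHS : ∫ ω, IP a b ω * IP a e ω = 0 := by
              have h2 : (fun ω => IP a b ω * IP a e ω) = fun ω => IP e a ω * IP a b ω := by
                funext ω; rw [hIPcomm a e]; ring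
              calc ∫ ω, IP a b ω * IP a e ω = ∫ ω, IP e a ω * IP a b ω := by rw [h2]
                _ = 0 := gzero e a a b (Ne.symm hea) (Ne.symm hea) hbe
            rw [hLHS]
            have hae : ¬ a = e := fun h => hea h.symm
            simp [hab, hce, hbe, hae]
        · by_cases hae : a = e
          · subst hae
            by_cases hbc : b = c
            · subst hbc
              have h2 : (fun ω => IP a b ω * IP b a ω) = fun ω => IP a b ω * IP a b ω := by
                funext ω; rw [hIPcomm b a]
              rw [show (∫ ω, IP a b ω * IP b a ω) = ∫ ω, IP a b ω * IP a b ω from by rw [h2],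
                gF a b hab]
              simp [hab, hba]
            · have hca : ¬ c = a := fun h => hac h.symm
              have hcb : ¬ c = b := fun h => hbc h.symm
              have hLHS : ∫ ω, IP a b ω * IP c a ω = 0 := by
                have h2 : (fun ω => IP a b ω * IP c a ω) = fun ω => IP c a ω * IP a b ω := by
                  funext ω; ring
                calc ∫ ω, IP a b ω * IP c a ω = ∫ ω, IP c a ω * IP a b ω := by rw [h2]
                  _ = 0 := gzero c a a b (fun h => hca (h.symm ▸ rfl)) (fun h => hca (h.symm ▸ rfl)) (fun h => hcb (h.symm ▸ rfl))
              rw [hLHS]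
              simp [hab, hba, hac, hca, hbc, hcb]
          · have hea : ¬ e = a := fun h => hae h.symm
            rw [gzero a b c e hba (fun h => hac h.symm) (fun h => hae h.symm)]
            simp [hce, hac, hae]
  -- expand the main integrand
  have hmain1 : ∀ ω, (∑ k, Vhat i ω k * Vhat j ω k)
      = ∑ a, ∑ b, B i a * B j b * IP a b ω := by
    intro ω
    have h1 : ∀ k, Vhat i ω k * Vhat j ω k
        = ∑ a, ∑ b, B i a * B j b * (V a ω k * V b ω k) := by
      intro k
      rw [hVhat i ω k, hVhat j ω k, Finset.sum_mul_sum]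
      exact Finset.sum_congr rfl fun a _ => Finset.sum_congr rfl fun b _ => by ring
    rw [Finset.sum_congr rfl fun k _ => h1 k]
    rw [Finset.sum_comm]
    refine Finset.sum_congr rfl fun a _ => ?_
    rw [Finset.sum_comm]
    refine Finset.sum_congr rfl fun b _ => ?_
    rw [hIPdef]
    simp only []
    rw [Finset.mul_sum]
  have hmain2 : ∀ ω, (∑ k, Vhat i ω k * Vhat j ω k)^2
      = ∑ a, ∑ c, ∑ b, ∑ e, (B i a * B j b * (B i c * B j e)) * (IP a b ω * IP c e ω) := by
    intro ω
    rw [sq, hmain1 ω, Finset.sum_mul_sum]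
    refine Finset.sum_congr rfl fun a _ => Finset.sum_congr rfl fun c _ => ?_
    rw [Finset.sum_mul_sum]
    exact Finset.sum_congr rfl fun b _ => Finset.sum_congr rfl fun e _ => by ring
  have hmain3 : ∫ ω, (∑ k, Vhat i ω k * Vhat j ω k)^2
      = ∑ a, ∑ c, ∑ b, ∑ e, (B i a * B j b * (B i c * B j e)) * ∫ ω, IP a b ω * IP c e ω := by
    rw [integral_congr_ae (Filter.Eventually.of_forall hmain2)]
    rw [integral_finset_sum _ fun a _ => integrable_finset_sum _ fun c _ =>
      integrable_finset_sum _ fun b _ => integrable_finset_sum _ fun e _ =>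
        (hIPIPint a b c e).const_mul _]
    refine Finset.sum_congr rfl fun a _ => ?_
    rw [integral_finset_sum _ fun c _ => integrable_finset_sum _ fun b _ =>
      integrable_finset_sum _ fun e _ => (hIPIPint a b c e).const_mul _]
    refine Finset.sum_congr rfl fun c _ => ?_
    rw [integral_finset_sum _ fun b _ =>
      integrable_finset_sum _ fun e _ => (hIPIPint a b c e).const_mul _]
    refine Finset.sum_congr rfl fun b _ => ?_
    rw [integral_finset_sum _ fun e _ => (hIPIPint a b c e).const_mul _]
    exact Finset.sum_congr rfl fun e _ => integral_const_mul _ _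
  -- matrix identities
  have hBs : ∀ a b, B a b = B b a := by
    intro a b
    conv_lhs => rw [← hBsym]
    rw [Matrix.transpose_apply]
  have hBdot : ∀ p q, ∑ a, B p a * B q a = B p q := by
    intro p q
    have h1 : ∑ a, B p a * B q a = ∑ a, B p a * B a q :=
      Finset.sum_congr rfl fun a _ => by rw [hBs q a]
    rw [h1, ← Matrix.mul_apply, hBidem]
  -- variance
  have hXm : Measurable fun ω => ∑ k, (V i ω k)^2 :=
    Finset.measurable_sum _ fun k _ => (hVk i k).pow_const 2
  have hvar : variance (fun ω => ∑ k, (V i ω k)^2) ℙ = m4 - tr^2 := by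
    have hX2 : MemLp (fun ω => ∑ k, (V i ω k)^2) 2 ℙ :=
      (memLp_two_iff_integrable_sq hXm.aestronglyMeasurable).2 (hmom4 i)
    rw [variance_eq_sub hX2]
    have e1 : (∫ ω, ((fun ω' => ∑ k, (V i ω' k)^2) ^ 2) ω) = m4 := by
      rw [hm4def]
      exact integral_congr_ae (Filter.Eventually.of_forall fun ω => by simp)
    have hik2 : ∀ k : Fin d, Integrable (fun ω => (V i ω k)^2) ℙ := fun k => by
      have h := hsqint i k k
      simpa [pow_two] using h
    have e2 : (∫ ω, ∑ k, (V i ω k)^2) = tr := by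
      rw [integral_finset_sum _ fun k _ => hik2 k, htr]
      refine Finset.sum_congr rfl fun k _ => ?_
      rw [← hcov i k k]
      exact integral_congr_ae (Filter.Eventually.of_forall fun ω => by simp [pow_two])
    show (∫ ω, ((fun ω' => ∑ k, (V i ω' k)^2) ^ 2) ω) - (∫ ω, ∑ k, (V i ω k)^2)^2
        = m4 - tr^2
    rw [e1, e2]
  -- put it all together
  rw [hmain3]
  rw [Finset.sum_congr rfl fun a _ => Finset.sum_congr rfl fun c _ =>
    Finset.sum_congr rfl fun b _ => Finset.sum_congr rfl fun e _ => by rw [key a b c e]]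
  rw [my_halg (B i) (B j) (tr^2) F (m4 - tr^2 - 2*F)]
  rw [hBdot i j]
  have h2 : ∑ a, B i a * B i a = B i i := hBdot i i
  have h3 : ∑ a, B j a * B j a = B j j := hBdot j j
  rw [h2, h3, hvar]
  ring
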